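/- Let n ≥ 2 and k ≥ n + 2. There exists a full k-coloring Γ of the standard n-sphere S^n such that every great (n−1)-sphere of S^n contains at most n + 1 colors; that is, for every n-dimensional linear subspace P of ℝ^{n+1}, the image Γ(S^n ∩ P) has at most n + 1 elements. -/

import Mathlib

namespace SharpAux

noncomputable def vv (n : ℕ) (t : ℝ) : EuclideanSpace ℝ (Fin (n + 1)) :=
  (WithLp.equiv 2 _).symm (fun i => t ^ (i : ℕ))

lemma vv_apply (n : ℕ) (t : ℝ) (i : Fin (n + 1)) : vv n t i = t ^ (i : ℕ) := rfl

lemma vv_li (n : ℕ) (t : Fin (n + 1) → ℝ) (ht : Function.Injective t) :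
    LinearIndependent ℝ (fun a => vv n (t a)) := by
  have hdet : IsUnit (Matrix.vandermonde t) := by
    rw [Matrix.isUnit_iff_isUnit_det]
    exact isUnit_iff_ne_zero.mpr (Matrix.det_vandermonde_ne_zero_iff.mpr ht)
  have h := Matrix.linearIndependent_rows_iff_isUnit.mpr hdet
  exact h.map' (WithLp.linearEquiv 2 ℝ (Fin (n+1) → ℝ)).symm.toLinearMap (LinearEquiv.ker _)

lemma vv_ne_zero (n : ℕ) (t : ℝ) : vv n t ≠ 0 := by
  intro h
  have : vv n t 0 = 0 := by rw [h]; rfl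
  rw [vv_apply] at this
  simp at this

lemma norm_vv_pos (n : ℕ) (t : ℝ) : 0 < ‖vv n t‖ := norm_pos_iff.mpr (vv_ne_zero n t)

noncomputable def pp (n : ℕ) (t : ℝ) : EuclideanSpace ℝ (Fin (n + 1)) :=
  ‖vv n t‖⁻¹ • vv n t

lemma pp_mem_sphere (n : ℕ) (t : ℝ) :
    pp n t ∈ Metric.sphere (0 : EuclideanSpace ℝ (Fin (n + 1))) 1 := by
  have h := norm_vv_pos n t
  simp [pp, norm_smul, abs_of_pos (inv_pos.mpr h), inv_mul_cancel₀ h.ne']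

lemma pp_apply (n : ℕ) (t : ℝ) (i : Fin (n + 1)) : pp n t i = ‖vv n t‖⁻¹ * t ^ (i : ℕ) := by
  simp [pp, vv_apply]

lemma pp_inj (n : ℕ) (hn : 1 ≤ n) : Function.Injective (pp n) := by
  intro s t h
  have h0 := congrFun (congrArg (fun f => (WithLp.equiv 2 _) f) h) ⟨0, by omega⟩
  have h1 := congrFun (congrArg (fun f => (WithLp.equiv 2 _) f) h) ⟨1, by omega⟩
  simp only [WithLp.equiv_apply] at h0 h1
  rw [pp_apply, pp_apply] at h0 h1
  simp only [pow_zero, pow_one, mul_one] at h0 h1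
  rw [h0] at h1
  have hne : (‖vv n t‖⁻¹ : ℝ) ≠ 0 := by
    have := SharpAux.norm_vv_pos n t; positivity
  exact mul_left_cancel₀ hne h1
end SharpAux

open SharpAux

/-- Sharpness (Euclidean analogue): for `n ≥ 2` and `k ≥ n + 2` there is a full `k`-coloring
of the standard `n`-sphere in which every great `(n-1)`-sphere contains at most `n + 1`
colors. -/
theorem sharp_great_sphere_k (n k : ℕ) (hn : 2 ≤ n) (hk : n + 2 ≤ k) :
    ∃ Γ : (Metric.sphere (0 : EuclideanSpace ℝ (Fin (n + 1))) 1) → Fin k,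
      Function.Surjective Γ ∧
      ∀ P : Submodule ℝ (EuclideanSpace ℝ (Fin (n + 1))),
        Module.finrank ℝ P = n →
        (Γ '' {p | (p : EuclideanSpace ℝ (Fin (n + 1))) ∈ P}).ncard ≤ n + 1 := by
  classical
  set E := EuclideanSpace ℝ (Fin (n + 1))
  set Sph := Metric.sphere (0 : E) 1
  have hk0 : 0 < k := by omega
  set z : Fin k := ⟨0, hk0⟩ with hz
  -- special points: q j := pp n (j : ℝ)  for j : Fin k
  set q : Fin k → E := fun j => pp n (j : ℝ) with hq
  have hqmem : ∀ j, q j ∈ Sph := fun j => pp_mem_sphere n _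
  have hqinj : Function.Injective q := by
    intro a b hab
    have := pp_inj n (by omega) hab
    exact Fin.val_injective (Nat.cast_injective this)
  set Γ : Sph → Fin k := fun x =>
    if h : ∃ j : Fin k, j ≠ z ∧ (x : E) = q j then h.choose else z with hΓ
  have hΓq : ∀ j : Fin k, j ≠ z → Γ ⟨q j, hqmem j⟩ = j := by
    intro j hj
    have hex : ∃ j' : Fin k, j' ≠ z ∧ (q j : E) = q j' := ⟨j, hj, rfl⟩
    rw [hΓ]
    simp only [dif_pos hex]
    exact hqinj hex.choose_spec.2.symm
  refine ⟨Γ, ?_, ?_⟩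
  · -- surjectivity
    intro c
    by_cases hc : c = z
    · -- a point not equal to any q j : its 0-th coordinate is negative
      refine ⟨⟨-(q z), ?_⟩, ?_⟩
      · have h := hqmem z
        simp only [Sph, mem_sphere_zero_iff_norm] at h ⊢
        rwa [norm_neg]
      · rw [hΓ, hc]
        simp only
        rw [dif_neg]
        rintro ⟨j, hj, hjeq⟩
        have h0 : (-(q z) : E) ⟨0, by omega⟩ = q j ⟨0, by omega⟩ := by rw [hjeq]
        have hA : (-(q z) : E) ⟨0, by omega⟩ = -(‖vv n (z : ℝ)‖⁻¹) := by
          have h1 : (-(q z) : E) ⟨0, by omega⟩ = -((q z : E) ⟨0, by omega⟩) := rfl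
          rw [h1, hq]
          simp only [pp_apply]
          norm_num
        have hB : (q j : E) ⟨0, by omega⟩ = ‖vv n ((j : Fin k) : ℝ)‖⁻¹ := by
          rw [hq]
          simp only [pp_apply]
          norm_num
        rw [hA, hB] at h0
        have h1 : (0:ℝ) < ‖vv n (z : ℝ)‖⁻¹ := by
          have := norm_vv_pos n (z : ℝ); positivity
        have h2 : (0:ℝ) < ‖vv n ((j : Fin k) : ℝ)‖⁻¹ := by
          have := norm_vv_pos n ((j : Fin k) : ℝ); positivity
        linarith
    · exact ⟨⟨q c, hqmem c⟩, hΓq c hc⟩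
  · -- hyperplane bound
    intro P hP
    set S : Set (Fin k) := {j | vv n (j : ℝ) ∈ P} with hS
    have hqP : ∀ j, q j ∈ P ↔ j ∈ S := by
      intro j
      have hne := (norm_vv_pos n (j : ℝ)).ne'
      constructor
      · intro h
        have h2 := P.smul_mem (‖vv n (j : ℝ)‖) h
        have h3 : (‖vv n (j : ℝ)‖ : ℝ) • q j = vv n (j : ℝ) := by
          simp [hq, pp, smul_smul, mul_inv_cancel₀ hne]
        rwa [h3] at h2
      · intro h
        have : q j = ‖vv n (j : ℝ)‖⁻¹ • vv n (j : ℝ) := rfl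
        rw [this]
        exact P.smul_mem _ h
    -- S has at most n elements
    have hScard : S.ncard ≤ n := by
      by_contra hcon
      push_neg at hcon
      have hfin : S.Finite := Set.toFinite S
      obtain ⟨T, hTS, hTcard⟩ := Set.exists_subset_card_eq (show n + 1 ≤ S.ncard from hcon)
      have hTfin : T.Finite := hfin.subset hTS
      set T' : Finset (Fin k) := hTfin.toFinset with hT'
      have hcardT : T'.card = n + 1 := by
        rw [hT', ← Set.ncard_eq_toFinset_card T hTfin]; exact hTcard
      set e : T' ≃ Fin (n + 1) := T'.equivFinOfCardEq hcardT with he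
      have hmem : ∀ a : Fin (n + 1), vv n (((e.symm a : T') : Fin k) : ℝ) ∈ P := by
        intro a
        have := (e.symm a).2
        exact hTS ((Set.Finite.mem_toFinset hTfin).mp this)
      set t : Fin (n + 1) → ℝ := fun a => (((e.symm a : T') : Fin k) : ℝ) with ht
      have htinj : Function.Injective t := by
        intro a b hab
        apply e.symm.injective
        apply Subtype.ext
        exact Fin.val_injective (Nat.cast_injective hab)
      have hli := vv_li n t htinj
      set f : Fin (n + 1) → P := fun a => ⟨vv n (t a), hmem a⟩ with hf
      have hlif : LinearIndependent ℝ f := by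
        apply LinearIndependent.of_comp P.subtype
        exact hli
      have := hlif.fintype_card_le_finrank
      rw [Fintype.card_fin, hP] at this
      omega
    -- image is inside insert 0 S
    have himg : Γ '' {p : Sph | (p : E) ∈ P} ⊆ insert z S := by
      rintro c ⟨x, hx, rfl⟩
      rw [hΓ]
      simp only
      by_cases h : ∃ j : Fin k, j ≠ z ∧ (x : E) = q j
      · rw [dif_pos h]
        right
        have h2 := h.choose_spec.2
        rw [← hqP]
        rw [← h2]
        exact hx
      · rw [dif_neg h]; left; rfl
    calc (Γ '' {p : Sph | (p : E) ∈ P}).ncard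
        ≤ (insert z S).ncard := by
          apply Set.ncard_le_ncard himg (Set.toFinite _)
      _ ≤ S.ncard + 1 := Set.ncard_insert_le _ _
      _ ≤ n + 1 := by omega
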